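/- (Dual combinatorial partition identity) With the same setup: t ≥ 1, p₀,...,p_t ∈ R with p_t = 1, τ a ring automorphism of a commutative ring R, X_{t,s} and Π_x as before. Then for every s > 0: Σ_{i=0}^{t} p_{t−i}^{τ^i} · Σ_{x ∈ X_{t,s−i}} Π_x^{τ^i} = 0, where Π_x^{τ^i} means applying τ^i to Π_x. -/

import Mathlib

noncomputable section

/-- `Π_x` for a tuple `x = (x₁,…,x_k)` (given as a list), namely
`Π_x = (−1)^k ∏_{j=1}^k τ^{x₁+⋯+x_j}(p_{t−x_j})`, defined by the recursion
`Π_[] = 1`, `Π_{a::l} = −τ^a (p_{t−a} · Π_l)`. -/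
def piProd {R : Type*} [CommRing R] (τ : R ≃+* R) (p : ℕ → R) (t : ℕ) : List ℕ → R
  | [] => 1
  | a :: l => -((τ ^ a) (p (t - a) * piProd τ p t l))

/-- `Σ_{x ∈ X_{t,s}} Π_x`, where `X_{t,s}` is the set of tuples of integers in `[1,t]`
summing to `s` (encoded as compositions of `s` all of whose parts are `≤ t`). -/
def innerSum {R : Type*} [CommRing R] (τ : R ≃+* R) (p : ℕ → R) (t s : ℕ) : R :=
  ∑ x ∈ Finset.univ.filter (fun x : Composition s => ∀ a ∈ x.blocks, a ≤ t),
    piProd τ p t x.blocks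

section aux

variable {R : Type*} [CommRing R] (τ : R ≃+* R) (p : ℕ → R) (t : ℕ)

lemma blocks_ne_nil {s : ℕ} (hs : 0 < s) (c : Composition s) : c.blocks ≠ [] := by
  intro h
  have := c.blocks_sum
  rw [h] at this
  simp at this
  omega

lemma innerSum_zero : innerSum τ p t 0 = 1 := by
  have hu : ∀ c : Composition 0, c.blocks = [] := by
    intro c
    cases h : c.blocks with
    | nil => rfl
    | cons a l =>
      have hpos : 0 < a := c.blocks_pos (by rw [h]; exact List.mem_cons_self)
      have hsum := c.blocks_sum
      rw [h, List.sum_cons] at hsum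
      omega
  unfold innerSum
  have : (Finset.univ.filter (fun x : Composition 0 => ∀ a ∈ x.blocks, a ≤ t)) =
      {⟨[], by simp, by simp⟩} := by
    ext c
    simp only [Finset.mem_filter, Finset.mem_univ, true_and, Finset.mem_singleton]
    constructor
    · intro _; exact Composition.ext (by simp [hu c])
    · intro h; simp [h]
  rw [this, Finset.sum_singleton]
  rfl

def consComp (s i : ℕ) (hi : 0 < i) (his : i ≤ s) (c : Composition (s - i)) : Composition s :=
  ⟨i :: c.blocks,
   fun h => by
     rcases List.mem_cons.1 h with h | h
     · omega
     · exact c.blocks_pos h,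
   by rw [List.sum_cons, c.blocks_sum]; omega⟩

def tailComp {s : ℕ} (c : Composition s) : Composition (s - c.blocks.headI) :=
  ⟨c.blocks.tail,
   fun h => c.blocks_pos (List.mem_of_mem_tail h),
   by
     have hsum := c.blocks_sum
     cases h : c.blocks with
     | nil => rw [h] at hsum; simp at hsum ⊢; omega
     | cons a l =>
       rw [h, List.sum_cons] at hsum
       simp
       omega⟩

lemma headI_mem {s : ℕ} (hs : 0 < s) (c : Composition s) : c.blocks.headI ∈ c.blocks := by
  cases h : c.blocks with
  | nil => exact absurd h (blocks_ne_nil hs c)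
  | cons a l => simp

lemma headI_le {s : ℕ} (hs : 0 < s) (c : Composition s) : c.blocks.headI ≤ s := by
  calc c.blocks.headI ≤ c.blocks.sum :=
        List.single_le_sum (fun a ha => (c.blocks_pos ha).le) _ (headI_mem hs c)
    _ = s := c.blocks_sum

lemma innerSum_key {s : ℕ} (hs : 0 < s) :
    innerSum τ p t s =
      ∑ i ∈ Finset.Icc 1 (min t s),
        -((τ ^ i) (p (t - i)) * (τ ^ i) (innerSum τ p t (s - i))) := by
  have h1 : ∀ i : ℕ,
      -((τ ^ i) (p (t - i)) * (τ ^ i) (innerSum τ p t (s - i))) =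
      ∑ c ∈ Finset.univ.filter (fun x : Composition (s - i) => ∀ a ∈ x.blocks, a ≤ t),
        piProd τ p t (i :: c.blocks) := by
    intro i
    unfold innerSum
    rw [map_sum, Finset.mul_sum, ← Finset.sum_neg_distrib]
    refine Finset.sum_congr rfl fun c _ => ?_
    simp [piProd, map_mul]
  rw [Finset.sum_congr rfl (fun i _ => h1 i), Finset.sum_sigma']
  unfold innerSum
  refine Finset.sum_bij'
    (i := fun (c : Composition s) hc => (⟨c.blocks.headI, tailComp c⟩ : Σ i : ℕ, Composition (s - i)))
    (j := fun (x : Σ i : ℕ, Composition (s - i)) hx =>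
      consComp s x.1
        (by have := (Finset.mem_sigma.1 hx).1; simp only [Finset.mem_Icc] at this; omega)
        (by have := (Finset.mem_sigma.1 hx).1
            simp only [Finset.mem_Icc, le_min_iff] at this; omega) x.2)
    ?_ ?_ ?_ ?_ ?_
  · -- i lands in sigma
    intro c hc
    simp only [Finset.mem_filter, Finset.mem_univ, true_and] at hc
    refine Finset.mem_sigma.2 ⟨?_, ?_⟩
    · simp only [Finset.mem_Icc, le_min_iff]
      exact ⟨c.blocks_pos (headI_mem hs c), hc _ (headI_mem hs c), headI_le hs c⟩
    · simp only [Finset.mem_filter, Finset.mem_univ, true_and]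
      exact fun a ha => hc a (List.mem_of_mem_tail ha)
  · -- j lands in filter
    intro x hx
    have h1 := (Finset.mem_sigma.1 hx).1
    have h2 := (Finset.mem_sigma.1 hx).2
    simp only [Finset.mem_Icc, le_min_iff] at h1
    simp only [Finset.mem_filter, Finset.mem_univ, true_and] at h2 ⊢
    intro a ha
    rcases List.mem_cons.1 ha with h | h
    · omega
    · exact h2 a h
  · -- left inverse : j (i c) = c
    intro c hc
    refine Composition.ext ?_
    show c.blocks.headI :: (tailComp c).blocks = c.blocks
    show c.blocks.headI :: c.blocks.tail = c.blocks
    cases h : c.blocks with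
    | nil => exact absurd h (blocks_ne_nil hs c)
    | cons a l => simp [h]
  · -- right inverse : i (j x) = x
    rintro ⟨i, c⟩ hx
    exact congrArg (Sigma.mk i) (Composition.ext rfl)
  · -- summands
    intro c hc
    show piProd τ p t c.blocks = piProd τ p t (c.blocks.headI :: c.blocks.tail)
    cases h : c.blocks with
    | nil => exact absurd h (blocks_ne_nil hs c)
    | cons a l => rfl

end aux

/-- dual combinatorial partition identity.  With the same setup as in the
previous statement (`t ≥ 1`, `p_t = 1`, `τ` a ring automorphism of a commutative ring `R`):
for every `s > 0`, `Σ_{i=0}^{t} τ^i(p_{t−i}) · τ^i(Σ_{x ∈ X_{t,s−i}} Π_x) = 0`, with the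
convention that the inner sum is `0` when `s − i < 0`. -/
theorem stmt_14 {R : Type*} [CommRing R] (τ : R ≃+* R) (p : ℕ → R) (t : ℕ) (ht : 1 ≤ t)
    (hp : p t = 1) (s : ℕ) (hs : 0 < s) :
    ∑ i ∈ Finset.range (t + 1),
      (if i ≤ s then (τ ^ i) (p (t - i)) * (τ ^ i) (innerSum τ p t (s - i)) else 0) = 0 := by
  rw [Finset.sum_range_succ']
  have h0 : (if 0 ≤ s then (τ ^ 0) (p (t - 0)) * (τ ^ 0) (innerSum τ p t (s - 0)) else 0)
      = innerSum τ p t s := by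
    simp only [Nat.zero_le, if_true, Nat.sub_zero, pow_zero, hp]
    show 1 * (1 : R ≃+* R) (innerSum τ p t s) = _
    rw [one_mul]
    rfl
  rw [h0, innerSum_key τ p t hs, Finset.sum_neg_distrib]
  have hfil : Finset.Icc 1 (min t s) = (Finset.Icc 1 t).filter (· ≤ s) := by
    ext j
    simp only [Finset.mem_Icc, Finset.mem_filter, le_min_iff]
    omega
  have h2 : ∑ i ∈ Finset.range t,
      (if i + 1 ≤ s then (τ ^ (i + 1)) (p (t - (i + 1))) *
        (τ ^ (i + 1)) (innerSum τ p t (s - (i + 1))) else 0)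
      = ∑ j ∈ Finset.Icc 1 (min t s),
        (τ ^ j) (p (t - j)) * (τ ^ j) (innerSum τ p t (s - j)) := by
    rw [eq_comm, hfil, ← Finset.sum_filter]
    refine Finset.sum_nbij' (i := fun j => j - 1) (j := fun i => i + 1) ?_ ?_ ?_ ?_ ?_
    · intro a ha; simp only [Finset.mem_filter, Finset.mem_Icc, Finset.mem_range] at ha ⊢; omega
    · intro a ha; simp only [Finset.mem_filter, Finset.mem_Icc, Finset.mem_range] at ha ⊢; omega
    · intro a ha; simp only [Finset.mem_filter, Finset.mem_Icc, Finset.mem_range] at ha ⊢; omega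
    · intro a ha; simp only [Finset.mem_filter, Finset.mem_Icc, Finset.mem_range] at ha ⊢; omega
    · intro a ha
      simp only [Finset.mem_filter, Finset.mem_Icc] at ha
      have h : a - 1 + 1 = a := by omega
      rw [h]
  rw [h2]
  ring

end
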